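/- (Proposition 1, attractivity part.) Let f : ℝ^n × ℝ^m → ℝ^n and u : ℝ^n → ℝ^m be continuous, let V : ℝ^n → [0,∞) be continuously differentiable, and let α₃ : [0,∞) → [0,∞) be continuous, strictly increasing with α₃(0) = 0 and α₃(s) > 0 for s > 0, such that ⟨∇V(x), f(x, u(x))⟩ ≤ −α₃(V(x)) for all x ∈ ℝ^n. Let x : [0,∞) → ℝ^n be continuously differentiable with x'(t) = f(x(t), u(x(t))) for all t ≥ 0. Then V(x(t)) → 0 as t → ∞. -/

import Mathlib

open scoped RealInnerProductSpace

theorem stmt18 (n m : ℕ) (hn : 1 ≤ n) (hm : 1 ≤ m)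
    (f : EuclideanSpace ℝ (Fin n) → EuclideanSpace ℝ (Fin m) → EuclideanSpace ℝ (Fin n))
    (u : EuclideanSpace ℝ (Fin n) → EuclideanSpace ℝ (Fin m))
    (hf : Continuous (fun pr : EuclideanSpace ℝ (Fin n) × EuclideanSpace ℝ (Fin m) => f pr.1 pr.2))
    (hu : Continuous u)
    (V : EuclideanSpace ℝ (Fin n) → ℝ) (hVnonneg : ∀ x, 0 ≤ V x)
    (hV : ContDiff ℝ 1 V)
    (α₃ : ℝ → ℝ) (hα₃cont : ContinuousOn α₃ (Set.Ici (0:ℝ)))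
    (hα₃mono : StrictMonoOn α₃ (Set.Ici (0:ℝ)))
    (hα₃zero : α₃ 0 = 0) (hα₃pos : ∀ s, 0 < s → 0 < α₃ s)
    (hdecr : ∀ x, ⟪gradient V x, f x (u x)⟫ ≤ -α₃ (V x))
    (x : ℝ → EuclideanSpace ℝ (Fin n))
    (hode : ∀ t ∈ Set.Ici (0:ℝ), HasDerivAt x (f (x t) (u (x t))) t) :
    Filter.Tendsto (fun t => V (x t)) Filter.atTop (nhds 0) := by
  set g : ℝ → ℝ := fun t => V (x t) with hg_def
  -- derivative of g
  have hgd : ∀ t ∈ Set.Ici (0:ℝ),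
      HasDerivAt g (⟪gradient V (x t), f (x t) (u (x t))⟫) t := by
    intro t ht
    have hVd : DifferentiableAt ℝ V (x t) := (hV.differentiable one_ne_zero) (x t)
    have hgrad := hVd.hasGradientAt
    have hfd := hgrad.hasFDerivAt
    have := hfd.comp_hasDerivAt t (hode t ht)
    simpa [InnerProductSpace.toDual_apply_apply, Function.comp_def, hg_def] using this
  -- α₃ nonneg on nonneg
  have hα₃mono' : MonotoneOn α₃ (Set.Ici (0:ℝ)) := hα₃mono.monotoneOn
  have hα₃nonneg : ∀ s, 0 ≤ s → 0 ≤ α₃ s := by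
    intro s hs
    have := hα₃mono' (Set.mem_Ici.mpr le_rfl) (Set.mem_Ici.mpr hs) hs
    simpa [hα₃zero] using this
  -- deriv of g nonpositive on interior
  have hderiv_le : ∀ t ∈ Set.Ici (0:ℝ), deriv g t ≤ -α₃ (g t) := by
    intro t ht
    rw [(hgd t ht).deriv]
    exact hdecr (x t)
  have hcont : ContinuousOn g (Set.Ici (0:ℝ)) :=
    fun t ht => ((hgd t ht).continuousAt).continuousWithinAt
  have hdiff : DifferentiableOn ℝ g (interior (Set.Ici (0:ℝ))) := by
    intro t ht
    rw [interior_Ici] at ht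
    exact ((hgd t (Set.mem_Ici.mpr (le_of_lt ht))).differentiableAt).differentiableWithinAt
  -- g is antitone on Ici 0
  have hanti : AntitoneOn g (Set.Ici (0:ℝ)) := by
    apply antitoneOn_of_deriv_nonpos (convex_Ici 0) hcont hdiff
    intro t ht
    rw [interior_Ici] at ht
    calc deriv g t ≤ -α₃ (g t) := hderiv_le t (Set.mem_Ici.mpr (le_of_lt ht))
      _ ≤ 0 := neg_nonpos.mpr (hα₃nonneg _ (hVnonneg _))
  -- key: for any ε > 0 there is t₀ ≥ 0 with g t₀ ≤ ε
  have key : ∀ ε : ℝ, 0 < ε → ∃ t₀ : ℝ, 0 ≤ t₀ ∧ g t₀ ≤ ε := by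
    intro ε hε
    by_contra h
    push_neg at h
    have hgt : ∀ t : ℝ, 0 ≤ t → ε < g t := fun t ht => h t ht
    set c := α₃ ε with hc
    have hcpos : 0 < c := hα₃pos ε hε
    -- h(t) = g t + c * t is antitone on Ici 0
    have hhd : ∀ t ∈ Set.Ici (0:ℝ), HasDerivAt (fun t => g t + c * t)
        (⟪gradient V (x t), f (x t) (u (x t))⟫ + c) t := by
      intro t ht
      have := (hgd t ht).add ((hasDerivAt_id t).const_mul c)
      simpa [Pi.add_def] using this
    have hanti2 : AntitoneOn (fun t => g t + c * t) (Set.Ici (0:ℝ)) := by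
      apply antitoneOn_of_deriv_nonpos (convex_Ici 0)
      · exact fun t ht => ((hhd t ht).continuousAt).continuousWithinAt
      · intro t ht
        rw [interior_Ici] at ht
        exact ((hhd t (Set.mem_Ici.mpr (le_of_lt ht))).differentiableAt).differentiableWithinAt
      · intro t ht
        rw [interior_Ici] at ht
        rw [(hhd t (Set.mem_Ici.mpr (le_of_lt ht))).deriv]
        have h1 : ⟪gradient V (x t), f (x t) (u (x t))⟫ ≤ -α₃ (g t) := hdecr (x t)
        have h2 : c ≤ α₃ (g t) :=
          hα₃mono' (Set.mem_Ici.mpr hε.le) (Set.mem_Ici.mpr (hVnonneg _))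
            (hgt t ht.le).le
        linarith
    have hdiv : (0:ℝ) ≤ g 0 / c := div_nonneg (hVnonneg _) hcpos.le
    have hT0 : (0:ℝ) ≤ g 0 / c + 1 := by linarith
    have hA := hanti2 (Set.mem_Ici.mpr le_rfl) (Set.mem_Ici.mpr hT0) hT0
    simp only at hA
    have hcT : c * (g 0 / c + 1) = g 0 + c := by
      field_simp
    have hgT : g (g 0 / c + 1) ≤ -c := by
      rw [hcT] at hA; linarith
    have hnn : 0 ≤ g (g 0 / c + 1) := hVnonneg _
    linarith
  -- conclude tendsto
  rw [Metric.tendsto_atTop]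
  intro ε hε
  obtain ⟨t₀, ht₀, hgt₀⟩ := key (ε / 2) (by linarith)
  refine ⟨t₀, fun t ht => ?_⟩
  have h1 : g t ≤ g t₀ := hanti (Set.mem_Ici.mpr ht₀) (Set.mem_Ici.mpr (ht₀.trans ht)) ht
  have h2 : 0 ≤ g t := hVnonneg _
  rw [Real.dist_eq]
  rw [abs_sub_lt_iff]
  constructor <;> [skip; linarith]
  simp only [hg_def] at *
  linarith
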